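/- In a cop-win graph on n vertices, the cop has a strategy that captures the robber within at most n cop moves. -/

import Mathlib

/-- The closed neighbourhood `N[v]` of a vertex. -/
def closedNbhd {V : Type*} (G : SimpleGraph V) (v : V) : Set V :=
  insert v {u | G.Adj v u}

/-- `v` dominates `u`: `N[v] ⊇ N[u]`. -/
def Dominates {V : Type*} (G : SimpleGraph V) (v u : V) : Prop :=
  closedNbhd G u ⊆ closedNbhd G v

/-- `v` dominates `u` in the subgraph induced on `S`. -/
def DominatesOn {V : Type*} (G : SimpleGraph V) (S : Set V) (v u : V) : Prop :=
  ∀ w ∈ S, w ∈ closedNbhd G u → w ∈ closedNbhd G v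

/-- A (finite) graph is dismantlable: its vertices can be ordered `v_1, …, v_n` so that
for each `i < n` some later `v_j` dominates `v_i` in the subgraph induced on
`{v_i, …, v_n}`. -/
def Dismantlable {V : Type*} (G : SimpleGraph V) : Prop :=
  ∃ (n : ℕ) (e : Fin n ≃ V), ∀ i : Fin n, (i : ℕ) + 1 < n →
    ∃ j : Fin n, i < j ∧
      DominatesOn G {w | ∃ k : Fin n, i ≤ k ∧ e k = w} (e j) (e i)

/-- A full-information cop strategy: an initial vertex, and a move function taking the
current cop and robber positions to a new cop position, which must be the current one or
an adjacent one. -/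
structure CopStrategy {V : Type*} (G : SimpleGraph V) where
  init : V
  move : V → V → V
  valid : ∀ c r, move c r = c ∨ G.Adj c (move c r)

/-- A full-information robber strategy: an initial vertex chosen knowing the cop's start,
and a move function taking the cop's (just updated) position and the robber's position to
a new robber position, which must be the current one or an adjacent one. -/
structure RobberStrategy {V : Type*} (G : SimpleGraph V) where
  init : V → V
  move : V → V → V
  valid : ∀ c r, move c r = r ∨ G.Adj r (move c r)

/-- The pair of (cop, robber) positions after `k` full rounds of play: the cop moves
first in each round, then the robber responds. -/
def play {V : Type*} (G : SimpleGraph V) (cs : CopStrategy G) (rs : RobberStrategy G) :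
    ℕ → V × V
  | 0 => (cs.init, rs.init cs.init)
  | k + 1 =>
      let p := play G cs rs k
      let c' := cs.move p.1 p.2
      (c', rs.move c' p.2)

/-- The cop wins: there is a cop strategy such that against every robber strategy, at some
round the cop's move lands on the robber's current vertex. -/
def CopWin {V : Type*} (G : SimpleGraph V) : Prop :=
  ∃ cs : CopStrategy G, ∀ rs : RobberStrategy G,
    ∃ k : ℕ, (play G cs rs (k + 1)).1 = (play G cs rs k).2

attribute [local instance] Classical.propDecidable

namespace CopAux

variable {V : Type*} (G : SimpleGraph V)

/-- a legal one-step move in `G`. -/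
def Step (x y : V) : Prop := y = x ∨ G.Adj x y

lemma mem_closedNbhd {x y : V} : x ∈ closedNbhd G y ↔ x = y ∨ G.Adj y x := by
  simp [closedNbhd]

lemma step_iff_mem {x y : V} : Step G x y ↔ y ∈ closedNbhd G x := by
  simp [Step, mem_closedNbhd]

lemma self_mem_closedNbhd (x : V) : x ∈ closedNbhd G x := by
  simp [closedNbhd]

/-- Cop positions when playing strategy `cs` against robber position sequence `r`. -/
def copSeq (cs : CopStrategy G) (r : ℕ → V) : ℕ → V
  | 0 => cs.init
  | k + 1 => cs.move (copSeq cs r k) (r k)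

/-- Robber positions when playing strategy `rs` against cop position sequence `c`. -/
def robSeq (rs : RobberStrategy G) (c : ℕ → V) : ℕ → V
  | 0 => rs.init (c 0)
  | k + 1 => rs.move (c (k + 1)) (robSeq rs c k)

/-- `cs` captures every legal robber trajectory within `n` moves. -/
def CopBeatsAll (cs : CopStrategy G) (n : ℕ) : Prop :=
  ∀ r : ℕ → V, (∀ k, Step G (r k) (r (k + 1))) →
    ∃ k, k < n ∧ copSeq G cs r (k + 1) = r k

/-- `rs` evades every legal cop trajectory forever. -/
def RobBeatsAll (rs : RobberStrategy G) : Prop :=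
  ∀ c : ℕ → V, (∀ k, Step G (c k) (c (k + 1))) →
    ∀ k, c (k + 1) ≠ robSeq G rs c k

/-- The robber's evading move. -/
noncomputable def escMove (c r : V) : V :=
  if h : ∃ x, x ∈ closedNbhd G r ∧ x ∉ closedNbhd G c then h.choose else r

lemma escMove_valid (c r : V) : escMove G c r = r ∨ G.Adj r (escMove G c r) := by
  rw [escMove]
  by_cases h : ∃ x, x ∈ closedNbhd G r ∧ x ∉ closedNbhd G c
  · rw [dif_pos h]
    exact ((mem_closedNbhd G).mp h.choose_spec.1).imp id id
  · rw [dif_neg h]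
    exact Or.inl rfl

lemma escMove_spec (c r : V) (h : ∃ x, x ∈ closedNbhd G r ∧ x ∉ closedNbhd G c) :
    escMove G c r ∉ closedNbhd G c := by
  rw [escMove, dif_pos h]
  exact h.choose_spec.2

/-- The robber's evading initial choice. -/
noncomputable def escInit (hinit : ∀ c : V, ∃ r, r ∉ closedNbhd G c) (c : V) : V :=
  (hinit c).choose

lemma escInit_spec (hinit : ∀ c : V, ∃ r, r ∉ closedNbhd G c) (c : V) :
    escInit G hinit c ∉ closedNbhd G c :=
  (hinit c).choose_spec

/-- The evasion strategy when no vertex dominates another. -/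
noncomputable def escStrat (hinit : ∀ c : V, ∃ r, r ∉ closedNbhd G c) : RobberStrategy G where
  init := escInit G hinit
  move c r := escMove G c r
  valid c r := escMove_valid G c r

/-- If no vertex dominates another one then the robber escapes forever. -/
lemma exists_corner [Fintype V] (h2 : 2 ≤ Fintype.card V)
    (H : ¬ ∃ rs : RobberStrategy G, RobBeatsAll G rs) :
    ∃ u v : V, u ≠ v ∧ closedNbhd G u ⊆ closedNbhd G v := by
  by_contra hno
  push_neg at hno
  apply H
  have hinit : ∀ c : V, ∃ r, r ∉ closedNbhd G c := by
    intro c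
    by_contra hall
    push_neg at hall
    obtain ⟨w, hw⟩ := Fintype.exists_ne_of_one_lt_card (by omega) c
    exact hno w c hw (fun x _ => hall x)
  refine ⟨escStrat G hinit, ?_⟩
  intro c hc
  have key : ∀ k, robSeq G (escStrat G hinit) c k ∉ closedNbhd G (c k) := by
    intro k
    induction k with
    | zero =>
        show escInit G hinit (c 0) ∉ _
        exact escInit_spec G hinit (c 0)
    | succ k ih =>
        have hck : c (k + 1) ∈ closedNbhd G (c k) := (step_iff_mem G).mp (hc k)
        have hne : robSeq G (escStrat G hinit) c k ≠ c (k + 1) := fun h => ih (h ▸ hck)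
        have hex : ∃ x, x ∈ closedNbhd G (robSeq G (escStrat G hinit) c k) ∧
            x ∉ closedNbhd G (c (k + 1)) := by
          have hsub := hno (robSeq G (escStrat G hinit) c k) (c (k + 1)) hne
          rw [Set.not_subset] at hsub
          obtain ⟨a, ha1, ha2⟩ := hsub
          exact ⟨a, ha1, ha2⟩
        show escMove G (c (k + 1)) (robSeq G (escStrat G hinit) c k) ∉ _
        exact escMove_spec G _ _ hex
  intro k hcap
  exact key k (hcap ▸ (step_iff_mem G).mp (hc k))

/-- retraction `V → V \ {u}` sending `u` to its dominator `v`. -/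
noncomputable def proj {u v : V} (hne : u ≠ v) (x : V) : {y : V // y ≠ u} :=
  if h : x = u then ⟨v, fun hv => hne hv.symm⟩ else ⟨x, h⟩

lemma proj_coe {u v : V} (hne : u ≠ v) (x : {y : V // y ≠ u}) : proj hne (x : V) = x := by
  simp only [proj, dif_neg x.2]

lemma proj_of_ne {u v : V} (hne : u ≠ v) {x : V} (hx : x ≠ u) : (proj hne x : V) = x := by
  simp only [proj, dif_neg hx]

lemma proj_u {u v : V} (hne : u ≠ v) : (proj hne u : V) = v := by
  simp [proj]

lemma adj_vu {u v : V} (hne : u ≠ v) (hdom : closedNbhd G u ⊆ closedNbhd G v) :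
    G.Adj v u := by
  rcases (mem_closedNbhd G).mp (hdom (self_mem_closedNbhd G u)) with h | h
  · exact absurd h hne
  · exact h

lemma step_proj {u v : V} (hne : u ≠ v) (hdom : closedNbhd G u ⊆ closedNbhd G v)
    {x y : V} (h : Step G x y) :
    Step (G.comap (Subtype.val : {y : V // y ≠ u} → V)) (proj hne x) (proj hne y) := by
  rcases h with h | h
  · subst h; exact Or.inl rfl
  by_cases hx : x = u
  · have hy : y ≠ u := by
      intro hyu
      rw [hx, hyu] at h
      exact G.irrefl h
    have hu : G.Adj u y := by rw [← hx]; exact h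
    have hyv : y ∈ closedNbhd G v := hdom ((mem_closedNbhd G).mpr (Or.inr hu))
    rcases (mem_closedNbhd G).mp hyv with h1 | h1
    · refine Or.inl (Subtype.ext ?_)
      rw [proj_of_ne hne hy, hx, proj_u hne, h1]
    · refine Or.inr ?_
      show G.Adj (proj hne x : V) (proj hne y : V)
      rw [proj_of_ne hne hy, hx, proj_u hne]
      exact h1
  · by_cases hy : y = u
    · have hu : G.Adj x u := by rw [← hy]; exact h
      have hxv : x ∈ closedNbhd G v := hdom ((mem_closedNbhd G).mpr (Or.inr hu.symm))
      rcases (mem_closedNbhd G).mp hxv with h1 | h1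
      · refine Or.inl (Subtype.ext ?_)
        rw [proj_of_ne hne hx, hy, proj_u hne, h1]
      · refine Or.inr ?_
        show G.Adj (proj hne x : V) (proj hne y : V)
        rw [proj_of_ne hne hx, hy, proj_u hne]
        exact h1.symm
    · refine Or.inr ?_
      show G.Adj (proj hne x : V) (proj hne y : V)
      rw [proj_of_ne hne hx, proj_of_ne hne hy]
      exact h

/-- Lift a robber strategy on the corner-removed graph to the full graph. -/
noncomputable def liftRob {u v : V} (hne : u ≠ v)
    (rs' : RobberStrategy (G.comap (Subtype.val : {y : V // y ≠ u} → V))) :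
    RobberStrategy G where
  init c := (rs'.init (proj hne c) : V)
  move c r := if h : r = u then r else (rs'.move (proj hne c) ⟨r, h⟩ : V)
  valid c r := by
    by_cases h : r = u
    · rw [dif_pos h]; exact Or.inl rfl
    · rw [dif_neg h]
      rcases rs'.valid (proj hne c) ⟨r, h⟩ with h1 | h1
      · exact Or.inl (congrArg Subtype.val h1)
      · exact Or.inr h1

/-- the escape property descends to the graph with the corner removed. -/
lemma no_rob_descend {u v : V} (hne : u ≠ v) (hdom : closedNbhd G u ⊆ closedNbhd G v)
    (H : ¬ ∃ rs : RobberStrategy G, RobBeatsAll G rs) :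
    ¬ ∃ rs' : RobberStrategy (G.comap (Subtype.val : {y : V // y ≠ u} → V)),
        RobBeatsAll _ rs' := by
  rintro ⟨rs', hrs'⟩
  apply H
  refine ⟨liftRob G hne rs', ?_⟩
  intro c hc k hcap
  set c' : ℕ → {y : V // y ≠ u} := fun k => proj hne (c k) with hc'def
  have hc' : ∀ k, Step (G.comap (Subtype.val : {y : V // y ≠ u} → V)) (c' k) (c' (k + 1)) :=
    fun k => step_proj G hne hdom (hc k)
  have hr : ∀ k, robSeq G (liftRob G hne rs') c k = (robSeq _ rs' c' k).val := by
    intro k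
    induction k with
    | zero => rfl
    | succ k ih =>
        have hmv : ∀ (cc rr : V), (liftRob G hne rs').move cc rr =
            if h : rr = u then rr else (rs'.move (proj hne cc) ⟨rr, h⟩ : {y : V // y ≠ u}).val :=
          fun _ _ => rfl
        show (liftRob G hne rs').move (c (k + 1)) (robSeq G (liftRob G hne rs') c k) = _
        rw [ih, hmv, dif_neg (robSeq _ rs' c' k).2]
        rfl
  have hfin : c' (k + 1) = robSeq _ rs' c' k := by
    show proj hne (c (k + 1)) = _
    rw [hcap, hr k, proj_coe]
  exact hrs' c' hc' k hfin

/-- lift a cop strategy through the corner removal, at the cost of one extra move. -/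
noncomputable def liftStrat {u v : V} (hne : u ≠ v) (hdom : closedNbhd G u ⊆ closedNbhd G v)
    (cs' : CopStrategy (G.comap (Subtype.val : {y : V // y ≠ u} → V))) : CopStrategy G where
  init := (cs'.init : V)
  move c r :=
    if c = u then v
    else if r ∈ closedNbhd G c then r
    else (cs'.move (proj hne c) (proj hne r) : V)
  valid c r := by
    by_cases hcu : c = u
    · rw [if_pos hcu, hcu]
      exact Or.inr (adj_vu G hne hdom).symm
    · rw [if_neg hcu]
      by_cases hr : r ∈ closedNbhd G c
      · rw [if_pos hr]
        exact ((mem_closedNbhd G).mp hr).imp id id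
      · rw [if_neg hr]
        rcases cs'.valid (proj hne c) (proj hne r) with h1 | h1
        · left
          rw [h1, proj_of_ne hne hcu]
        · right
          have h2 : G.Adj ((proj hne c : V)) _ := h1
          rwa [proj_of_ne hne hcu] at h2

lemma cop_lift {u v : V} (hne : u ≠ v) (hdom : closedNbhd G u ⊆ closedNbhd G v)
    (m : ℕ) (cs' : CopStrategy (G.comap (Subtype.val : {y : V // y ≠ u} → V)))
    (hcs' : CopBeatsAll _ cs' m) :
    ∃ cs : CopStrategy G, CopBeatsAll G cs (m + 1) := by
  refine ⟨liftStrat G hne hdom cs', ?_⟩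
  set cs := liftStrat G hne hdom cs' with hcs
  intro r hrtraj
  set ρ : ℕ → {y : V // y ≠ u} := fun k => proj hne (r k) with hρdef
  have hρ : ∀ k, Step _ (ρ k) (ρ (k + 1)) := fun k => step_proj G hne hdom (hrtraj k)
  obtain ⟨j, hj, hcap'⟩ := hcs' ρ hρ
  have hmv : ∀ c rr, cs.move c rr =
      if c = u then v
      else if rr ∈ closedNbhd G c then rr
      else (cs'.move (proj hne c) (proj hne rr) : V) := fun _ _ => rfl
  have key : ∀ k, (∀ i, i < k → copSeq G cs r (i + 1) ≠ r i) →
      copSeq G cs r k = (copSeq _ cs' ρ k).val := by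
    intro k
    induction k with
    | zero => exact fun _ => rfl
    | succ k ih =>
        intro hnocap
        have hk := ih (fun i hi => hnocap i (Nat.lt_succ_of_lt hi))
        have hku : copSeq G cs r k ≠ u := hk ▸ (copSeq _ cs' ρ k).2
        have hrk : r k ∉ closedNbhd G (copSeq G cs r k) := by
          intro hmem
          refine hnocap k (Nat.lt_succ_self k) ?_
          show cs.move (copSeq G cs r k) (r k) = r k
          rw [hmv, if_neg hku, if_pos hmem]
        show cs.move (copSeq G cs r k) (r k) = _
        rw [hmv, if_neg hku, if_neg hrk]
        show (cs'.move (proj hne (copSeq G cs r k)) (proj hne (r k)) : V) = _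
        rw [hk, proj_coe]
        rfl
  by_cases hcapt : ∃ k, k ≤ j ∧ copSeq G cs r (k + 1) = r k
  · obtain ⟨k, hk, hcap⟩ := hcapt
    exact ⟨k, by omega, hcap⟩
  · push_neg at hcapt
    have hj1 : copSeq G cs r (j + 1) = (proj hne (r j) : V) := by
      rw [key (j + 1) (fun i hi => hcapt i (by omega)), hcap']
    have hrju : r j = u := by
      by_contra hrj
      exact hcapt j le_rfl (by rw [hj1, proj_of_ne hne hrj])
    have hcjv : copSeq G cs r (j + 1) = v := by rw [hj1, hrju, proj_u hne]
    refine ⟨j + 1, by omega, ?_⟩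
    have hmem : r (j + 1) ∈ closedNbhd G v := by
      apply hdom
      rw [← hrju]
      exact (step_iff_mem G).mp (hrtraj j)
    show cs.move (copSeq G cs r (j + 1)) (r (j + 1)) = r (j + 1)
    rw [hcjv, hmv, if_neg (Ne.symm hne), if_pos hmem]

/-- Main induction: if the robber cannot escape forever, the cop catches in `card V` moves. -/
lemma main : ∀ (n : ℕ) {V : Type u} [Fintype V] (G : SimpleGraph V),
    Fintype.card V = n → (¬ ∃ rs : RobberStrategy G, RobBeatsAll G rs) →
    ∃ cs : CopStrategy G, CopBeatsAll G cs n := by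
  intro n
  induction n with
  | zero =>
      intro V _ G hcard H
      exfalso
      apply H
      refine ⟨⟨id, fun _ r => r, fun _ _ => Or.inl rfl⟩, ?_⟩
      intro c _ k
      exact ((Fintype.card_eq_zero_iff.mp hcard).elim (c 0))
  | succ n ih =>
      intro V _ G hcard H
      by_cases hn : n = 0
      · subst hn
        have hsub : Subsingleton V := Fintype.card_le_one_iff_subsingleton.mp (by omega)
        have hnonempty : Nonempty V := Fintype.card_pos_iff.mp (by omega)
        obtain ⟨v0⟩ := hnonempty
        refine ⟨⟨v0, fun _ r => r, fun c r => Or.inl (Subsingleton.elim r c)⟩, ?_⟩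
        intro r _
        exact ⟨0, Nat.one_pos, rfl⟩
      · have h2 : 2 ≤ Fintype.card V := by omega
        obtain ⟨u, v, huv, hdom⟩ := exists_corner G h2 H
        have hcard' : Fintype.card {y : V // y ≠ u} = n := by
          have h1 : Fintype.card {y : V // ¬ (y = u)} =
              Fintype.card V - Fintype.card {y : V // y = u} :=
            Fintype.card_subtype_compl _
          rw [Fintype.card_subtype_eq] at h1
          have h3 : Fintype.card {y : V // y ≠ u} = Fintype.card {y : V // ¬ (y = u)} := rfl
          omega
        obtain ⟨cs', hcs'⟩ := ih (G.comap (Subtype.val : {y : V // y ≠ u} → V)) hcard'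
          (no_rob_descend G huv hdom H)
        exact cop_lift G huv hdom n cs' hcs'

end CopAux

/-- in a cop-win graph on `n` vertices the cop can guarantee capture within
at most `n` cop moves. -/
theorem copWin_capture_in_card_moves {V : Type*} [Fintype V] (G : SimpleGraph V)
    (hG : G.Connected) (hc : CopWin G) :
    ∃ cs : CopStrategy G, ∀ rs : RobberStrategy G,
      ∃ k : ℕ, k < Fintype.card V ∧ (play G cs rs (k + 1)).1 = (play G cs rs k).2 := by

  classical
  have H : ¬ ∃ rs : RobberStrategy G, CopAux.RobBeatsAll G rs := by
    rintro ⟨rs, hrs⟩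
    obtain ⟨cs0, hcs0⟩ := hc
    obtain ⟨k, hk⟩ := hcs0 rs
    set c : ℕ → V := fun k => (play G cs0 rs k).1 with hcdef
    have hctraj : ∀ k, CopAux.Step G (c k) (c (k + 1)) := by
      intro k
      have hv := cs0.valid (play G cs0 rs k).1 (play G cs0 rs k).2
      show CopAux.Step G _ (play G cs0 rs (k + 1)).1
      rcases hv with h | h
      · exact Or.inl (by simp [play, h]; rfl)
      · exact Or.inr (by simpa [play] using h)
    have hrseq : ∀ k, CopAux.robSeq G rs c k = (play G cs0 rs k).2 := by
      intro k
      induction k with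
      | zero => rfl
      | succ k ihk =>
          show rs.move (c (k + 1)) (CopAux.robSeq G rs c k) = _
          rw [ihk]
          rfl
    exact hrs c hctraj k (by rw [hrseq k]; exact hk)
  obtain ⟨cs, hcs⟩ := CopAux.main (Fintype.card V) G rfl H
  refine ⟨cs, ?_⟩
  intro rs
  set r : ℕ → V := fun k => (play G cs rs k).2 with hrdef
  have hrtraj : ∀ k, CopAux.Step G (r k) (r (k + 1)) := by
    intro k
    have hv := rs.valid (cs.move (play G cs rs k).1 (play G cs rs k).2) (play G cs rs k).2
    show CopAux.Step G _ (play G cs rs (k + 1)).2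
    rcases hv with h | h
    · exact Or.inl (by simpa [play] using h)
    · exact Or.inr (by simpa [play] using h)
  have hcseq : ∀ k, CopAux.copSeq G cs r k = (play G cs rs k).1 := by
    intro k
    induction k with
    | zero => rfl
    | succ k ihk =>
        show cs.move (CopAux.copSeq G cs r k) (r k) = _
        rw [ihk]
        rfl
  obtain ⟨k, hk, hcap⟩ := hcs r hrtraj
  exact ⟨k, hk, by rw [← hcseq (k + 1)]; exact hcap⟩
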